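/- arXiv:1112.1805 — 2 statements merged into one kernel-verified Lean document; each statement's English description precedes it below -/
import Mathlib

section
/- The function b defined by b(x) = sin((π/2)v(|x|−1)) for 1 ≤ |x| ≤ 2, b(x) = cos((π/2)v(|x|/2−1)) for 2 < |x| ≤ 4, and b(x) = 0 otherwise, satisfies b(x)^2 + b(2x)^2 + b(4x)^2 ≤ 1 for all x, with equality b(x)^2 + b(2x)^2 = 1 for 1 ≤ |x| ≤ 2. -/
noncomputable def meyerV (x : ℝ) : ℝ :=
  if x < 0 then 0
  else if x ≤ 1 then 35*x^4 - 84*x^5 + 70*x^6 - 20*x^7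
  else 1

noncomputable def meyerB (x : ℝ) : ℝ :=
  if 1 ≤ |x| ∧ |x| ≤ 2 then Real.sin (Real.pi / 2 * meyerV (|x| - 1))
  else if 2 < |x| ∧ |x| ≤ 4 then Real.cos (Real.pi / 2 * meyerV (|x| / 2 - 1))
  else 0

lemma meyerV_zero : meyerV 0 = 0 := by norm_num [meyerV]

lemma meyerV_one : meyerV 1 = 1 := by norm_num [meyerV]

lemma meyerB_sq_le (x : ℝ) : meyerB x ^ 2 ≤ 1 := by
  unfold meyerB
  split_ifs with h1 h2
  · exact Real.sin_sq_le_one _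
  · exact Real.cos_sq_le_one _
  · norm_num

lemma meyerB_eq_zero_of_lt {x : ℝ} (h : |x| < 1) : meyerB x = 0 := by
  unfold meyerB
  rw [if_neg (fun h' => absurd h'.1 (not_le.2 h)),
      if_neg (fun h' => absurd h'.1 (not_lt.2 (by linarith)))]

lemma meyerB_eq_zero_of_gt {x : ℝ} (h : 4 < |x|) : meyerB x = 0 := by
  unfold meyerB
  rw [if_neg (fun h' => absurd h'.2 (not_le.2 (by linarith))),
      if_neg (fun h' => absurd h'.2 (not_le.2 h))]

lemma meyerB_abs_one {x : ℝ} (h : |x| = 1) : meyerB x = 0 := by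
  unfold meyerB
  rw [if_pos ⟨le_of_eq h.symm, by rw [h]; norm_num⟩, h]
  norm_num [meyerV_zero]

lemma meyerB_abs_four {x : ℝ} (h : |x| = 4) : meyerB x = 0 := by
  unfold meyerB
  rw [if_neg (fun h' => absurd h'.2 (by rw [h]; norm_num)),
      if_pos ⟨by rw [h]; norm_num, le_of_eq h⟩, h]
  norm_num [meyerV_one, Real.cos_pi_div_two]

lemma meyerB_key {x : ℝ} (h1 : 1 ≤ |x|) (h2 : |x| ≤ 2) :
    meyerB x ^ 2 + meyerB (2*x) ^ 2 = 1 := by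
  have habs : |2*x| = 2 * |x| := by rw [abs_mul]; norm_num
  rcases eq_or_lt_of_le h1 with h | h
  · rw [meyerB_abs_one h.symm]
    have h2x : |2*x| = 2 := by rw [habs, ← h]; ring
    have hb2 : meyerB (2*x) = 1 := by
      unfold meyerB
      rw [if_pos ⟨by rw [h2x]; norm_num, le_of_eq h2x⟩, h2x]
      norm_num [meyerV_one]
    rw [hb2]; norm_num
  · have h2x1 : 2 < |2*x| := by rw [habs]; linarith
    have h2x2 : |2*x| ≤ 4 := by rw [habs]; linarith
    have hb2 : meyerB (2*x) = Real.cos (Real.pi/2 * meyerV (|x| - 1)) := by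
      unfold meyerB
      rw [if_neg (fun h' => absurd h'.2 (not_le.2 h2x1)), if_pos ⟨h2x1, h2x2⟩, habs]
      norm_num
    have hb1 : meyerB x = Real.sin (Real.pi/2 * meyerV (|x| - 1)) := by
      unfold meyerB; rw [if_pos ⟨h1, h2⟩]
    rw [hb1, hb2, Real.sin_sq_add_cos_sq]

theorem meyerB_partition :
    (∀ x : ℝ, meyerB x ^ 2 + meyerB (2*x) ^ 2 + meyerB (4*x) ^ 2 ≤ 1) ∧
    (∀ x : ℝ, 1 ≤ |x| → |x| ≤ 2 → meyerB x ^ 2 + meyerB (2*x) ^ 2 = 1) := by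
  constructor
  · intro x
    have h2a : |2*x| = 2 * |x| := by rw [abs_mul]; norm_num
    have h4a : |4*x| = 4 * |x| := by rw [abs_mul]; norm_num
    rcases lt_or_ge (|x|) 1 with h1 | h1
    · rw [meyerB_eq_zero_of_lt h1]
      rcases lt_or_ge (|2*x|) 1 with h2 | h2
      · rw [meyerB_eq_zero_of_lt h2]
        have := meyerB_sq_le (4*x)
        simpa using this
      · have hle : |2*x| ≤ 2 := by rw [h2a]; linarith
        have hk := meyerB_key h2 hle
        have e : (2:ℝ)*(2*x) = 4*x := by ring
        rw [e] at hk
        nlinarith [hk]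
    · rcases le_or_gt (|x|) 2 with h2 | h2
      · have hk := meyerB_key h1 h2
        have h4z : meyerB (4*x) = 0 := by
          rcases eq_or_lt_of_le (show (4:ℝ) ≤ |4*x| by rw [h4a]; linarith) with h | h
          · exact meyerB_abs_four h.symm
          · exact meyerB_eq_zero_of_gt h
        rw [h4z]; nlinarith [hk]
      · rw [meyerB_eq_zero_of_gt (show 4 < |2*x| by rw [h2a]; linarith),
            meyerB_eq_zero_of_gt (show 4 < |4*x| by rw [h4a]; linarith)]
        have := meyerB_sq_le x
        simpa using this
  · intro x h1 h2
    exact meyerB_key h1 h2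
end

section
/- For the partial-sum identity of ψ̂₁: for all ω ∈ ℝ, the sum over j ≥ 0 of |ψ̂₁(2^{-2j} ω)|^2 equals 0 if |ω| ≤ 1/2, equals sin²((π/2)v(2|ω|−1)) if 1/2 < |ω| < 1, and equals 1 if |ω| ≥ 1. -/
noncomputable def psi1hat (ω : ℝ) : ℝ := Real.sqrt (meyerB (2*ω) ^ 2 + meyerB ω ^ 2)

lemma meyerB_of_le_one {x : ℝ} (h : |x| ≤ 1) : meyerB x = 0 := by
  rcases eq_or_lt_of_le h with h1 | h1
  · rw [meyerB, if_pos ⟨le_of_eq h1.symm, by linarith⟩, h1, sub_self, meyerV_zero, mul_zero,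
      Real.sin_zero]
  · rw [meyerB, if_neg (by push_neg; intro h2; linarith), if_neg (by push_neg; intro h2; linarith)]

lemma meyerB_of_four_le {x : ℝ} (h : 4 ≤ |x|) : meyerB x = 0 := by
  rcases eq_or_lt_of_le h with h1 | h1
  · rw [meyerB, if_neg (by push_neg; intro h2; linarith), if_pos ⟨by linarith, le_of_eq h1.symm⟩,
      ← h1]
    norm_num [meyerV_one]
  · rw [meyerB, if_neg (by push_neg; intro h2; linarith), if_neg (by push_neg; intro h2; linarith)]

lemma meyerB_mem1 {x : ℝ} (h1 : 1 ≤ |x|) (h2 : |x| ≤ 2) :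
    meyerB x = Real.sin (Real.pi / 2 * meyerV (|x| - 1)) := if_pos ⟨h1, h2⟩

lemma meyerB_mem2 {x : ℝ} (h1 : 2 < |x|) (h2 : |x| ≤ 4) :
    meyerB x = Real.cos (Real.pi / 2 * meyerV (|x| / 2 - 1)) := by
  rw [meyerB, if_neg (by push_neg; intro h; linarith), if_pos ⟨h1, h2⟩]

lemma abs_psi1hat_sq (ω : ℝ) : |psi1hat ω| ^ 2 = meyerB (2*ω) ^ 2 + meyerB ω ^ 2 := by
  rw [sq_abs, psi1hat, Real.sq_sqrt (by positivity)]

lemma key_sum {s : ℝ} (h1 : 1 ≤ |s|) (h4 : |s| < 4) :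
    meyerB (2*s) ^ 2 + meyerB s ^ 2 + (meyerB (2*(s/4)) ^ 2 + meyerB (s/4) ^ 2) = 1 := by
  have habs2 : |2*s| = 2*|s| := by rw [abs_mul]; norm_num
  have habsh : |2*(s/4)| = |s|/2 := by
    rw [show (2*(s/4)) = s/2 by ring, abs_div]; norm_num
  have habsq : |s/4| = |s|/4 := by rw [abs_div]; norm_num
  have hq0 : meyerB (s/4) = 0 := meyerB_of_le_one (by rw [habsq]; linarith)
  rcases le_or_gt |s| 2 with h2 | h2
  · have hh0 : meyerB (2*(s/4)) = 0 := meyerB_of_le_one (by rw [habsh]; linarith)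
    rcases eq_or_lt_of_le h1 with he | he
    · have hbs : meyerB s = 0 := meyerB_of_le_one he.ge
      have hb2 : meyerB (2*s) = 1 := by
        rw [meyerB_mem1 (by rw [habs2, ← he]; norm_num) (by rw [habs2, ← he]; norm_num),
          habs2, ← he]
        norm_num [meyerV_one]
      rw [hbs, hb2, hq0, hh0]; norm_num
    · have hb2 : meyerB (2*s) = Real.cos (Real.pi / 2 * meyerV (|s| - 1)) := by
        rw [meyerB_mem2 (by rw [habs2]; linarith) (by rw [habs2]; linarith), habs2]
        ring_nf
      have hbs : meyerB s = Real.sin (Real.pi / 2 * meyerV (|s| - 1)) := meyerB_mem1 h1 h2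
      rw [hb2, hbs, hq0, hh0]
      have := Real.sin_sq_add_cos_sq (Real.pi / 2 * meyerV (|s| - 1))
      linarith
  · have hb2 : meyerB (2*s) = 0 := meyerB_of_four_le (by rw [habs2]; linarith)
    have hbs : meyerB s = Real.cos (Real.pi / 2 * meyerV (|s| / 2 - 1)) :=
      meyerB_mem2 h2 (le_of_lt h4)
    have hh : meyerB (2*(s/4)) = Real.sin (Real.pi / 2 * meyerV (|s| / 2 - 1)) := by
      rw [meyerB_mem1 (by rw [habsh]; linarith) (by rw [habsh]; linarith), habsh]
    rw [hb2, hbs, hq0, hh]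
    have := Real.sin_sq_add_cos_sq (Real.pi / 2 * meyerV (|s| / 2 - 1))
    linarith

lemma coeff_eq (j : ℕ) : (2:ℝ) ^ (-(2 * (j:ℤ))) = ((4:ℝ) ^ j)⁻¹ := by
  rw [zpow_neg]
  congr 1
  rw [show (2 * (j:ℤ)) = ((2*j : ℕ) : ℤ) by push_cast; ring, zpow_natCast, pow_mul]
  norm_num

theorem psi1hat_partial_sum (ω : ℝ) :
    ∑' j : ℕ, |psi1hat ((2:ℝ) ^ (-(2 * (j:ℤ))) * ω)| ^ 2 =
      if |ω| ≤ 1/2 then 0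
      else if |ω| < 1 then Real.sin (Real.pi / 2 * meyerV (2 * |ω| - 1)) ^ 2
      else 1 := by
  have habsc : ∀ j : ℕ, |(2:ℝ) ^ (-(2 * (j:ℤ))) * ω| = ((4:ℝ) ^ j)⁻¹ * |ω| := by
    intro j
    rw [abs_mul, coeff_eq, abs_of_pos (by positivity)]
  have hcpos : ∀ j : ℕ, (0:ℝ) < ((4:ℝ) ^ j)⁻¹ := fun j => by positivity
  have hcle : ∀ j : ℕ, ((4:ℝ) ^ j)⁻¹ ≤ 1 := fun j => by
    rw [inv_le_one_iff₀]; right; exact one_le_pow₀ (by norm_num)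
  by_cases hsmall : |ω| ≤ 1/2
  · rw [if_pos hsmall]
    have hz : ∀ j : ℕ, |psi1hat ((2:ℝ) ^ (-(2 * (j:ℤ))) * ω)| ^ 2 = 0 := by
      intro j
      rw [abs_psi1hat_sq]
      have h1 : meyerB ((2:ℝ) ^ (-(2 * (j:ℤ))) * ω) = 0 := by
        apply meyerB_of_le_one
        rw [habsc]
        calc ((4:ℝ) ^ j)⁻¹ * |ω| ≤ 1 * (1/2) := by
              apply mul_le_mul (hcle j) hsmall (abs_nonneg _) zero_le_one
          _ ≤ 1 := by norm_num
      have h2 : meyerB (2 * ((2:ℝ) ^ (-(2 * (j:ℤ))) * ω)) = 0 := by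
        apply meyerB_of_le_one
        rw [abs_mul, habsc, abs_of_pos (by norm_num : (0:ℝ) < 2)]
        calc (2:ℝ) * (((4:ℝ) ^ j)⁻¹ * |ω|) ≤ 2 * (1 * (1/2)) := by
              apply mul_le_mul_of_nonneg_left _ (by norm_num)
              exact mul_le_mul (hcle j) hsmall (abs_nonneg _) zero_le_one
          _ = 1 := by norm_num
      rw [h1, h2]; norm_num
    rw [tsum_congr hz, tsum_zero]
  · rw [if_neg hsmall]
    push_neg at hsmall
    by_cases hmid : |ω| < 1
    · rw [if_pos hmid]
      rw [tsum_eq_single 0]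
      · rw [abs_psi1hat_sq]
        have hc0 : (2:ℝ) ^ (-(2 * ((0:ℕ):ℤ))) = 1 := by norm_num
        rw [hc0, one_mul]
        have h1 : meyerB ω = 0 := meyerB_of_le_one (le_of_lt hmid)
        have h2 : meyerB (2 * ω) = Real.sin (Real.pi / 2 * meyerV (2 * |ω| - 1)) := by
          have ha : |2 * ω| = 2 * |ω| := by rw [abs_mul]; norm_num
          rw [meyerB_mem1 (by rw [ha]; linarith) (by rw [ha]; linarith), ha]
        rw [h1, h2]; ring
      · intro j hj
        have hj1 : 1 ≤ j := Nat.one_le_iff_ne_zero.mpr hj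
        rw [abs_psi1hat_sq]
        have h4j : (4:ℝ) ≤ 4 ^ j := by
          calc (4:ℝ) = 4 ^ 1 := (pow_one 4).symm
            _ ≤ 4 ^ j := pow_le_pow_right₀ (by norm_num) hj1
        have hcj : ((4:ℝ) ^ j)⁻¹ ≤ (1/4 : ℝ) := by
          rw [show (1/4:ℝ) = (4:ℝ)⁻¹ by norm_num]
          exact inv_anti₀ (by norm_num) h4j
        have h1 : meyerB ((2:ℝ) ^ (-(2 * (j:ℤ))) * ω) = 0 := by
          apply meyerB_of_le_one
          rw [habsc]
          nlinarith [abs_nonneg ω, hcpos j]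
        have h2 : meyerB (2 * ((2:ℝ) ^ (-(2 * (j:ℤ))) * ω)) = 0 := by
          apply meyerB_of_le_one
          rw [abs_mul, habsc, abs_of_pos (by norm_num : (0:ℝ) < 2)]
          nlinarith [abs_nonneg ω, hcpos j]
        rw [h1, h2]; norm_num
    · rw [if_neg hmid]
      push_neg at hmid
      -- find n with 4^n ≤ |ω| < 4^(n+1)
      have hex : ∃ n : ℕ, |ω| < 4 ^ (n+1) := by
        obtain ⟨N, hN⟩ := pow_unbounded_of_one_lt |ω| (by norm_num : (1:ℝ) < 4)
        exact ⟨N, hN.trans_le (pow_le_pow_right₀ (by norm_num) (Nat.le_succ N))⟩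
      set n := Nat.find hex with hn
      have hn2 : |ω| < 4 ^ (n+1) := Nat.find_spec hex
      have hn1 : (4:ℝ) ^ n ≤ |ω| := by
        rcases Nat.eq_zero_or_pos n with h0 | h0
        · rw [h0]; simpa using hmid
        · have := Nat.find_min hex (Nat.sub_lt h0 one_pos)
          push_neg at this
          calc (4:ℝ) ^ n = 4 ^ (n - 1 + 1) := by rw [Nat.sub_add_cancel h0]
            _ ≤ |ω| := this
      have hvanish : ∀ j ∉ ({n, n+1} : Finset ℕ),
          |psi1hat ((2:ℝ) ^ (-(2 * (j:ℤ))) * ω)| ^ 2 = 0 := by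
        intro j hjmem
        simp only [Finset.mem_insert, Finset.mem_singleton] at hjmem
        push_neg at hjmem
        rw [abs_psi1hat_sq]
        rcases lt_or_gt_of_ne hjmem.1 with hlt | hgt
        · -- j < n : arguments are ≥ 4
          have hle : (4:ℝ) * 4 ^ j ≤ 4 ^ n := by
            calc (4:ℝ) * 4 ^ j = 4 ^ (j+1) := by rw [pow_succ]; ring
              _ ≤ 4 ^ n := pow_le_pow_right₀ (by norm_num) hlt
          have hb1 : (4:ℝ) ≤ ((4:ℝ) ^ j)⁻¹ * |ω| := by
            rw [le_inv_mul_iff₀ (by positivity)]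
            calc (4:ℝ) ^ j * 4 = 4 * 4 ^ j := by ring
              _ ≤ 4 ^ n := hle
              _ ≤ |ω| := hn1
          have h1 : meyerB ((2:ℝ) ^ (-(2 * (j:ℤ))) * ω) = 0 := by
            apply meyerB_of_four_le; rw [habsc]; exact hb1
          have h2 : meyerB (2 * ((2:ℝ) ^ (-(2 * (j:ℤ))) * ω)) = 0 := by
            apply meyerB_of_four_le
            rw [abs_mul, habsc, abs_of_pos (by norm_num : (0:ℝ) < 2)]
            nlinarith [hb1]
          rw [h1, h2]; norm_num
        · -- j ≥ n+2 : arguments < 1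
          have hj2 : n + 2 ≤ j := by omega
          have hle : (4:ℝ) ^ (n+2) ≤ 4 ^ j := pow_le_pow_right₀ (by norm_num) hj2
          have hinv : ((4:ℝ) ^ j)⁻¹ ≤ ((4:ℝ) ^ (n+2))⁻¹ :=
            inv_anti₀ (by positivity) hle
          have hb1 : ((4:ℝ) ^ j)⁻¹ * |ω| < (1:ℝ)/4 := by
            calc ((4:ℝ) ^ j)⁻¹ * |ω| ≤ ((4:ℝ) ^ (n+2))⁻¹ * |ω| := by
                  apply mul_le_mul_of_nonneg_right hinv (abs_nonneg _)
              _ < ((4:ℝ) ^ (n+2))⁻¹ * 4 ^ (n+1) := by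
                  apply mul_lt_mul_of_pos_left hn2 (by positivity)
              _ = 1/4 := by
                  rw [pow_succ, pow_succ, mul_inv, mul_inv]
                  field_simp
          have h1 : meyerB ((2:ℝ) ^ (-(2 * (j:ℤ))) * ω) = 0 := by
            apply meyerB_of_le_one; rw [habsc]; linarith
          have h2 : meyerB (2 * ((2:ℝ) ^ (-(2 * (j:ℤ))) * ω)) = 0 := by
            apply meyerB_of_le_one
            rw [abs_mul, habsc, abs_of_pos (by norm_num : (0:ℝ) < 2)]
            linarith
          rw [h1, h2]; norm_num
      rw [tsum_eq_sum hvanish, Finset.sum_pair (Nat.succ_ne_self n).symm]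
      set s : ℝ := (2:ℝ) ^ (-(2 * (n:ℤ))) * ω with hs
      have hsucc : (2:ℝ) ^ (-(2 * ((n+1:ℕ):ℤ))) * ω = s / 4 := by
        rw [hs, coeff_eq, coeff_eq, pow_succ, mul_inv]
        ring
      have habss : |s| = ((4:ℝ) ^ n)⁻¹ * |ω| := habsc n
      have hs1 : 1 ≤ |s| := by
        rw [habss, le_inv_mul_iff₀ (by positivity)]
        simpa using hn1
      have hs4 : |s| < 4 := by
        rw [habss, inv_mul_lt_iff₀ (by positivity)]
        calc |ω| < 4 ^ (n+1) := hn2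
          _ = 4 ^ n * 4 := pow_succ 4 n
      rw [hsucc, abs_psi1hat_sq, abs_psi1hat_sq]
      exact key_sum hs1 hs4
end
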